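/- For every ε ∈ (0, π) and ω > 0 there exist constants c₀, δ > 0, depending only on ε and ω, such that (1 + y) |exp(−y √(λ + s²))| ≤ c₀ e^{−δ s y} for all λ ∈ Σ_ε with |λ| ≥ ω and all real s, y ≥ 0. -/

import Mathlib

open MeasureTheory Real

/-- Principal complex square root `√z = z^(1/2)` (principal branch of `cpow`). -/
noncomputable def csqrt (z : ℂ) : ℂ := z ^ (1/2 : ℂ)

/-- The sector `Σ_ε = {λ ∈ ℂ : λ ≠ 0, |Arg λ| < π − ε}`. -/
def SigmaSector (ε : ℝ) : Set ℂ := {l : ℂ | l ≠ 0 ∧ |l.arg| < Real.pi - ε}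

/-- Mikhlin condition (M) with constant `cbar`, with `K = ⌊(d+1)/2⌋`. -/
def CondM (d : ℕ) (m : EuclideanSpace ℝ (Fin (d-1)) → ℂ) (cbar : ℝ) : Prop :=
  ContDiffOn ℝ ((d+1)/2 : ℕ) m {ξ : EuclideanSpace ℝ (Fin (d-1)) | ξ ≠ 0} ∧
  ∀ k : ℕ, k ≤ (d+1)/2 → ∀ ξ : EuclideanSpace ℝ (Fin (d-1)), ξ ≠ 0 →
    ‖ξ‖ ^ k * ‖iteratedFDerivWithin ℝ k m
        {ξ : EuclideanSpace ℝ (Fin (d-1)) | ξ ≠ 0} ξ‖ ≤ cbar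

/-- Parameterized Mikhlin condition (M*) with constants `(cbar, δ)`, `K = ⌊(d+1)/2⌋`. -/
def CondMStar (d : ℕ) (m : EuclideanSpace ℝ (Fin (d-1)) → ℝ → ℂ) (cbar δ : ℝ) : Prop :=
  (∀ y : ℝ, 0 ≤ y →
    ContDiffOn ℝ ((d+1)/2 : ℕ) (fun ξ => m ξ y)
      {ξ : EuclideanSpace ℝ (Fin (d-1)) | ξ ≠ 0}) ∧
  ∀ k : ℕ, k ≤ (d+1)/2 →
    ∀ ξ : EuclideanSpace ℝ (Fin (d-1)), ξ ≠ 0 → ∀ y : ℝ, 0 ≤ y →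
      ‖ξ‖ ^ k * ‖iteratedFDerivWithin ℝ k (fun ξ => m ξ y)
          {ξ : EuclideanSpace ℝ (Fin (d-1)) | ξ ≠ 0} ξ‖ ≤
        cbar * Real.exp (-δ * ‖ξ‖ * y) / (1 + y)

/-- The fundamental multiplier `m₀(s, y)`. -/
noncomputable def m0 (l : ℂ) (α : ℝ) (s y : ℝ) : ℂ :=
  ((csqrt (l + (s:ℂ)^2) + s) / ((α:ℂ) + l + csqrt (l + (s:ℂ)^2) + s)) *
    ((Complex.exp (-(y:ℂ) * csqrt (l + (s:ℂ)^2)) - Complex.exp (-(y:ℂ) * s)) / l)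

/-- `E(s, y) = e^{-ys} - e^{-y√(λ+s²)}`. -/
noncomputable def Efun (l : ℂ) (s y : ℝ) : ℂ :=
  Complex.exp (-(y:ℂ) * s) - Complex.exp (-(y:ℂ) * csqrt (l + (s:ℂ)^2))

private lemma aux_sq_le {u v : ℝ} (hu : 0 ≤ u) (hv : 0 ≤ v) (h : u^2 ≤ v^2) : u ≤ v := by
  nlinarith only [hu, hv, h]

private lemma aux_lb2 {M A B R : ℝ} (hM0 : 0 ≤ M) (hB : 0 ≤ B) (hRe : -(M*A) ≤ R) :
    (1-M)*(A^2+B^2) ≤ A^2 + 2*B*R + B^2 := by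
  nlinarith only [mul_nonneg hM0 (sq_nonneg (A-B)), mul_le_mul_of_nonneg_left hRe hB]

private lemma aux_cX {c X Y W : ℝ} (hc : 0 < c) (hc1 : c ≤ 1) (hX : 0 ≤ X) (hW : 0 ≤ W)
    (h : c*(X^2+Y^2) ≤ W^2) : c*X ≤ W := by
  refine aux_sq_le (mul_nonneg hc.le hX) hW ?_
  nlinarith only [h, mul_nonneg (mul_nonneg hc.le (sub_nonneg.2 hc1)) (sq_nonneg X),
    mul_nonneg hc.le (sq_nonneg Y)]

private lemma aux_sum_sq {ω s : ℝ} (hω : 0 ≤ ω) (hs : 0 ≤ s) :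
    (Real.sqrt ω + s)^2 ≤ 2*(ω+s^2) := by
  nlinarith only [sq_nonneg (Real.sqrt ω - s), Real.sq_sqrt hω]

private lemma aux_exp_bound {a y : ℝ} (ha : 0 < a) (hy : 0 ≤ y) :
    (1+y) * Real.exp (-(a*y)) ≤ 1 + 1/a := by
  have hE := Real.exp_pos (a*y)
  have h1 : a*y + 1 ≤ Real.exp (a*y) := Real.add_one_le_exp _
  have hay : 0 ≤ a*y := mul_nonneg ha.le hy
  have e2 : Real.exp (-(a*y)) ≤ 1 := by
    rw [Real.exp_neg]
    exact inv_le_one_of_one_le₀ (by linarith )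
  have e3 : y * Real.exp (-(a*y)) ≤ 1/a := by
    rw [Real.exp_neg, ← div_eq_mul_inv, div_le_div_iff₀ hE ha]
    nlinarith only [h1, hay]
  nlinarith only [e2, e3, hy, ha]


set_option maxHeartbeats 1000000 in
/-- `(1+y)|e^{-y√(λ+s²)}| ≤ c₀ e^{-δ s y}` for `λ ∈ Σ_ε`, `|λ| ≥ ω`. -/
theorem stmt_10 (ε ω : ℝ) (hε : ε ∈ Set.Ioo 0 Real.pi) (hω : 0 < ω) :
    ∃ c₀ δ : ℝ, 0 < c₀ ∧ 0 < δ ∧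
      ∀ l ∈ SigmaSector ε, ω ≤ ‖l‖ → ∀ s y : ℝ, 0 ≤ s → 0 ≤ y →
        (1 + y) * ‖Complex.exp (-(y:ℂ) * csqrt (l + (s:ℂ)^2))‖ ≤
          c₀ * Real.exp (-δ * s * y) := by
  obtain ⟨hε0, hεπ⟩ := hε
  set M : ℝ := max (Real.cos ε) 0 with hMdef
  have hM0 : 0 ≤ M := le_max_right _ _
  have hM1 : M < 1 := by
    have h1 : Real.cos ε < 1 := by
      have := Real.cos_lt_cos_of_nonneg_of_le_pi le_rfl hεπ.le hε0
      simpa using this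
    simp only [hMdef, max_lt_iff]
    exact ⟨h1, one_pos⟩
  set c : ℝ := 1 - M with hcdef
  have hc : 0 < c := by linarith
  have hc1 : c ≤ 1 := by linarith
  set δ : ℝ := c / 4 with hδdef
  have hδ : 0 < δ := by positivity
  set a : ℝ := δ * Real.sqrt ω with hadef
  have ha : 0 < a := by positivity
  clear_value M c δ a
  refine ⟨1 + 1 / a, δ, by positivity, hδ, ?_⟩
  rintro l ⟨hl0, harg⟩ hlω s y hs hy
  set w : ℂ := l + (s:ℂ)^2 with hwdef
  set A : ℝ := ‖l‖ with hAdef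
  set W : ℝ := ‖w‖ with hWdef
  have hA0 : (0:ℝ) < A := lt_of_lt_of_le hω hlω
  have hW0 : (0:ℝ) ≤ W := norm_nonneg w
  clear_value w A W
  -- Step A : Re l ≥ -(M * A)
  have hReL : -(M * A) ≤ l.re := by
    have hcos : Real.cos (Real.pi - ε) ≤ Real.cos |l.arg| :=
      Real.cos_le_cos_of_nonneg_of_le_pi (abs_nonneg _) (by linarith ) harg.le
    rw [Real.cos_abs, Real.cos_pi_sub] at hcos
    have hAne : ‖l‖ ≠ 0 := by rw [← hAdef]; exact hA0.ne'
    have hre : l.re = A * Real.cos l.arg := by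
      rw [Complex.cos_arg hl0, hAdef, mul_comm, div_mul_cancel₀ _ hAne]
    have hMc : -M ≤ Real.cos l.arg := le_trans (by simp [hMdef]) hcos
    have := mul_le_mul_of_nonneg_left hMc hA0.le
    rw [hre]; nlinarith only [this]
  -- real/imag parts of w
  have hwre : w.re = l.re + s^2 := by simp [hwdef, ← Complex.ofReal_pow]
  have hwim : w.im = l.im := by simp [hwdef, ← Complex.ofReal_pow]
  have hA2 : A^2 = l.re^2 + l.im^2 := by
    rw [hAdef, Complex.sq_norm, Complex.normSq_apply]; ring
  have hW2 : W^2 = A^2 + 2*s^2*l.re + s^4 := by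
    rw [hWdef, Complex.sq_norm, Complex.normSq_apply, hwre, hwim, hA2]; ring
  -- Step B : W² ≥ c (A² + (s²)²)
  have hWlb2 : c * (A^2 + (s^2)^2) ≤ W^2 := by
    rw [hW2, hcdef]
    have := aux_lb2 hM0 (sq_nonneg s) hReL
    nlinarith only [this]
  have hWA : c * A ≤ W := aux_cX hc hc1 hA0.le hW0 hWlb2
  have hWs : c * s^2 ≤ W := by
    refine aux_cX (Y := A) hc hc1 (sq_nonneg s) hW0 ?_
    linarith only [hWlb2]
  have hWpos : 0 < W := lt_of_lt_of_le (by positivity) hWA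
  have hw0 : w ≠ 0 := by
    intro h
    rw [hWdef, h] at hWpos
    simp at hWpos
  -- Step C : A ≤ W + s²
  have hAW : A ≤ W + s^2 := by
    have h1 : ‖l‖ ≤ ‖w‖ + ‖(s:ℂ)^2‖ := by
      have hlw : l = w + (-(s:ℂ)^2) := by rw [hwdef]; ring
      calc ‖l‖ = ‖w + (-(s:ℂ)^2)‖ := by rw [← hlw]
        _ ≤ ‖w‖ + ‖-(s:ℂ)^2‖ := norm_add_le _ _
        _ = ‖w‖ + ‖(s:ℂ)^2‖ := by rw [norm_neg]
    have h2 : ‖(s:ℂ)^2‖ = s^2 := by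
      rw [norm_pow, Complex.norm_real, Real.norm_eq_abs, abs_of_nonneg hs]
    rw [← hAdef, ← hWdef, h2] at h1
    exact h1
  -- Step D : c W ≤ W + Re w
  have hD : c * W ≤ W + w.re := by
    rw [hwre, hcdef]
    have h1 : M * A ≤ M * (W + s^2) := mul_le_mul_of_nonneg_left hAW hM0
    have h2 : M * s^2 ≤ s^2 := by nlinarith only [hM1, sq_nonneg s]
    linarith only [h1, h2, hReL]
  -- Step E : (c/2)(ω + s²) ≤ W
  have hE : (c/2) * (ω + s^2) ≤ W := by
    have h1 : c * ω ≤ c * A := mul_le_mul_of_nonneg_left hlω hc.le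
    linarith only [h1, hWA, hWs]
  -- properties of z = csqrt w
  set z : ℂ := csqrt w with hzdef
  clear_value z
  have hz2 : z * z = w := by
    rw [hzdef]
    unfold csqrt
    rw [← Complex.cpow_add _ _ hw0]
    norm_num
  have habsz : ‖z‖^2 = W := by
    rw [hzdef]
    unfold csqrt
    rw [Complex.norm_cpow_of_ne_zero hw0]
    have h1 : (1/2 : ℂ) = ((1/2 : ℝ) : ℂ) := by norm_num
    rw [h1, Complex.ofReal_re, Complex.ofReal_im, mul_zero, Real.exp_zero, div_one, ← hWdef]
    rw [← Real.rpow_natCast (W ^ ((1:ℝ)/2)) 2, ← Real.rpow_mul hW0]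
    norm_num
  have hzre0 : 0 ≤ z.re := by
    rw [hzdef]
    unfold csqrt
    rw [Complex.cpow_def_of_ne_zero hw0, Complex.exp_re]
    apply mul_nonneg (Real.exp_pos _).le
    have him : (Complex.log w * (1/2 : ℂ)).im = w.arg / 2 := by
      simp [Complex.mul_im, Complex.log_im]
      ring
    rw [him]
    apply Real.cos_nonneg_of_mem_Icc
    constructor
    · have := Complex.neg_pi_lt_arg w; linarith
    · have := Complex.arg_le_pi w; linarith
  have hzresq : 2 * z.re^2 = W + w.re := by
    have h1 : z.re^2 - z.im^2 = w.re := by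
      have h := congrArg Complex.re hz2
      simp [Complex.mul_re] at h
      nlinarith only [h]
    have h2 : z.re^2 + z.im^2 = W := by
      rw [← habsz, Complex.sq_norm, Complex.normSq_apply]; ring
    linarith only [h1, h2]
  -- Re z ≥ a + δ s
  have hzre_lb : a + δ * s ≤ z.re := by
    refine aux_sq_le (by positivity) hzre0 ?_
    have hz1 : c * W / 2 ≤ z.re^2 := by linarith only [hzresq, hD]
    have hz2' : c * ((c/2) * (ω + s^2)) ≤ c * W := mul_le_mul_of_nonneg_left hE hc.le
    have hpos : (0:ℝ) ≤ c^2*ω + c^2*s^2 := by positivity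
    have chain : (c/4)^2 * (2 * (ω + s^2)) ≤ z.re^2 := by nlinarith only [hz1, hz2', hpos]
    have key : (a + δ*s)^2 ≤ (c/4)^2 * (2 * (ω + s^2)) := by
      rw [hadef, hδdef]
      calc (c/4 * Real.sqrt ω + c/4 * s)^2 = (c/4)^2 * (Real.sqrt ω + s)^2 := by ring
        _ ≤ (c/4)^2 * (2*(ω+s^2)) :=
            mul_le_mul_of_nonneg_left (aux_sum_sq hω.le hs) (sq_nonneg _)
    linarith only [chain, key]
  -- final estimate
  have habse : ‖Complex.exp (-(y:ℂ) * z)‖ = Real.exp (-(y * z.re)) := by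
    rw [Complex.norm_exp]
    congr 1
    simp [Complex.mul_re]
  rw [habse]
  have e1 : Real.exp (-(y * z.re)) ≤ Real.exp (-(a*y)) * Real.exp (-(δ*s*y)) := by
    rw [← Real.exp_add]
    apply Real.exp_le_exp.mpr
    have := mul_le_mul_of_nonneg_left hzre_lb hy
    nlinarith only [this]
  calc (1 + y) * Real.exp (-(y * z.re))
      ≤ (1 + y) * (Real.exp (-(a*y)) * Real.exp (-(δ*s*y))) :=
        mul_le_mul_of_nonneg_left e1 (by linarith )
    _ = ((1+y) * Real.exp (-(a*y))) * Real.exp (-(δ*s*y)) := by ring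
    _ ≤ (1 + 1/a) * Real.exp (-(δ*s*y)) :=
        mul_le_mul_of_nonneg_right (aux_exp_bound ha hy) (Real.exp_pos _).le
    _ = (1 + 1/a) * Real.exp (-δ*s*y) := by ring_nf
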